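/- Fix r ∈ ℝ and define b : ℕ → ℝ by b(0) = 0, b(1) = 1, b(2) = 0, and b(n+2) = -(b(n-1) + r·b(n))/((n+1)(n+2)) for all n ≥ 1. Then the series ∑_{n=0}^∞ b(n)·(s - r)^n converges absolutely for every s ∈ ℝ, and the function L(s) = ∑_{n=0}^∞ b(n)·(s - r)^n satisfies L''(s) + s·L(s) = 0 for all s ∈ ℝ, L(r) = 0, and L'(r) = 1. -/

import Mathlib

private lemma airy_aux_bound (r : ℝ) (b : ℕ → ℝ)
    (hbrec : ∀ n : ℕ, 1 ≤ n →
      b (n + 2) = -(b (n - 1) + r * b n) / (((n : ℝ) + 1) * ((n : ℝ) + 2)))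
    (q : ℝ) (hq : 0 ≤ q) : ∃ C : ℝ, 0 ≤ C ∧ ∀ n : ℕ, |b n| * q ^ n ≤ C := by
  obtain ⟨N, hN⟩ := exists_nat_ge (q ^ 3 + |r| * q ^ 2)
  set C : ℝ := ∑ k ∈ Finset.range (N + 4), |b k| * q ^ k with hCdef
  have hC0 : 0 ≤ C := Finset.sum_nonneg fun i _ => by positivity
  refine ⟨C, hC0, fun n => ?_⟩
  induction n using Nat.strong_induction_on with
  | _ n ih =>
    by_cases hn : n < N + 4
    · exact Finset.single_le_sum (f := fun k => |b k| * q ^ k)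
        (fun i _ => by positivity) (Finset.mem_range.mpr hn)
    · push_neg at hn
      obtain ⟨k, rfl⟩ : ∃ k, n = k + 3 := ⟨n - 3, by omega⟩
      have h1 : |b k| * q ^ k ≤ C := ih k (by omega)
      have h2 : |b (k + 1)| * q ^ (k + 1) ≤ C := ih (k + 1) (by omega)
      have hden : (0:ℝ) < ((k:ℝ) + 2) * ((k:ℝ) + 3) := by positivity
      have hrec : b (k + 3) = -(b k + r * b (k + 1)) / (((k:ℝ) + 2) * ((k:ℝ) + 3)) := by
        have h := hbrec (k + 1) (by omega)
        push_cast at h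
        convert h using 3 <;> ring
      have hkN : (N : ℝ) ≤ (k : ℝ) + 2 := by
        have : N ≤ k + 2 := by omega
        exact_mod_cast this
      calc |b (k + 3)| * q ^ (k + 3)
          = |b k + r * b (k + 1)| / (((k:ℝ) + 2) * ((k:ℝ) + 3)) * q ^ (k + 3) := by
            rw [hrec, abs_div, abs_neg, abs_of_pos hden]
        _ ≤ (|b k| + |r| * |b (k + 1)|) / (((k:ℝ) + 2) * ((k:ℝ) + 3)) * q ^ (k + 3) := by
            gcongr
            calc |b k + r * b (k + 1)| ≤ |b k| + |r * b (k + 1)| := abs_add_le _ _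
              _ = |b k| + |r| * |b (k + 1)| := by rw [abs_mul]
        _ = ((|b k| * q ^ k) * q ^ 3 + |r| * ((|b (k + 1)| * q ^ (k + 1)) * q ^ 2))
              / (((k:ℝ) + 2) * ((k:ℝ) + 3)) := by
            rw [div_mul_eq_mul_div]
            congr 1
            ring
        _ ≤ (C * q ^ 3 + |r| * (C * q ^ 2)) / (((k:ℝ) + 2) * ((k:ℝ) + 3)) := by gcongr
        _ = C * ((q ^ 3 + |r| * q ^ 2) / (((k:ℝ) + 2) * ((k:ℝ) + 3))) := by ring
        _ ≤ C * 1 := by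
            apply mul_le_mul_of_nonneg_left _ hC0
            rw [div_le_one hden]
            nlinarith [Nat.cast_nonneg (α := ℝ) k]
        _ = C := mul_one C

private lemma airy_aux_summable (r : ℝ) (b : ℕ → ℝ)
    (hbrec : ∀ n : ℕ, 1 ≤ n →
      b (n + 2) = -(b (n - 1) + r * b n) / (((n : ℝ) + 1) * ((n : ℝ) + 2)))
    (j : ℕ) (t : ℝ) : Summable (fun n : ℕ => (n:ℝ) ^ j * (|b n| * |t| ^ n)) := by
  set q : ℝ := 2 * (|t| + 1) with hqdef
  have hq0 : (0:ℝ) < q := by positivity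
  obtain ⟨C, hC0, hC⟩ := airy_aux_bound r b hbrec q hq0.le
  have hx : ‖|t| / q‖ < 1 := by
    rw [Real.norm_eq_abs, abs_of_nonneg (by positivity), div_lt_one hq0]
    have := abs_nonneg t
    linarith
  have hg : Summable (fun n : ℕ => C * ((n:ℝ) ^ j * (|t| / q) ^ n)) :=
    (summable_pow_mul_geometric_of_norm_lt_one j hx).mul_left C
  refine Summable.of_nonneg_of_le (fun n => by positivity) (fun n => ?_) hg
  have h1 : |t| ^ n = (|t| / q) ^ n * q ^ n := by
    rw [← mul_pow, div_mul_cancel₀ _ hq0.ne']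
  have hxn : (0:ℝ) ≤ (|t| / q) ^ n := by positivity
  calc (n:ℝ) ^ j * (|b n| * |t| ^ n)
      = ((n:ℝ) ^ j * (|t| / q) ^ n) * (|b n| * q ^ n) := by rw [h1]; ring
    _ ≤ ((n:ℝ) ^ j * (|t| / q) ^ n) * C := by
        apply mul_le_mul_of_nonneg_left (hC n) (by positivity)
    _ = C * ((n:ℝ) ^ j * (|t| / q) ^ n) := by ring

theorem lagrange_multiplier_airy
    (r : ℝ) (b : ℕ → ℝ) (hb0 : b 0 = 0) (hb1 : b 1 = 1) (hb2 : b 2 = 0)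
    (hbrec : ∀ n : ℕ, 1 ≤ n →
      b (n + 2) = -(b (n - 1) + r * b n) / (((n : ℝ) + 1) * ((n : ℝ) + 2)))
    (L : ℝ → ℝ) (hL : ∀ s : ℝ, L s = ∑' n : ℕ, b n * (s - r) ^ n) :
    (∀ s : ℝ, Summable (fun n : ℕ => |b n * (s - r) ^ n|)) ∧
    (∀ s : ℝ, deriv (deriv L) s + s * L s = 0) ∧
    L r = 0 ∧ deriv L r = 1 := by
  have key := airy_aux_summable r b hbrec
  have keyQ : ∀ (j : ℕ) (s : ℝ),
      Summable (fun n : ℕ => (n:ℝ) ^ j * (|b n| * (|s - r| + 1) ^ n)) := by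
    intro j s
    have h := key j (|s - r| + 1)
    rwa [abs_of_pos (by positivity)] at h
  -- absolute convergence
  have hsum0 : ∀ s : ℝ, Summable (fun n : ℕ => |b n * (s - r) ^ n|) := by
    intro s
    have h := key 0 (s - r)
    simp only [pow_zero, one_mul] at h
    exact h.congr fun n => by rw [abs_mul, abs_pow]
  have hsum1 : ∀ s : ℝ, Summable (fun n : ℕ => b n * (s - r) ^ n) := fun s =>
    (hsum0 s).of_abs
  -- comparison bounds for first and second derivative series
  have hbd2 : ∀ (s y : ℝ), |y - r| ≤ |s - r| + 1 →
      ∀ n : ℕ, |b n * (n:ℝ) * (y - r) ^ (n - 1)|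
        ≤ (n:ℝ) ^ 1 * (|b n| * (|s - r| + 1) ^ n) := by
    intro s y hy n
    have hQ1 : (1:ℝ) ≤ |s - r| + 1 := by
      have := abs_nonneg (s - r); linarith
    have hp : |y - r| ^ (n - 1) ≤ (|s - r| + 1) ^ n :=
      (pow_le_pow_left₀ (abs_nonneg _) hy _).trans
        (pow_le_pow_right₀ hQ1 (Nat.sub_le n 1))
    calc |b n * (n:ℝ) * (y - r) ^ (n - 1)|
        = (n:ℝ) * (|b n| * |y - r| ^ (n - 1)) := by
          rw [abs_mul, abs_mul, abs_pow, abs_of_nonneg (Nat.cast_nonneg n : (0:ℝ) ≤ (n:ℝ))]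
          ring
      _ ≤ (n:ℝ) * (|b n| * (|s - r| + 1) ^ n) := by gcongr
      _ = (n:ℝ) ^ 1 * (|b n| * (|s - r| + 1) ^ n) := by rw [pow_one]
  have hbd3 : ∀ (s y : ℝ), |y - r| ≤ |s - r| + 1 →
      ∀ n : ℕ, |b n * (n:ℝ) * ((n - 1 : ℕ):ℝ) * (y - r) ^ (n - 1 - 1)|
        ≤ (n:ℝ) ^ 2 * (|b n| * (|s - r| + 1) ^ n) := by
    intro s y hy n
    have hQ1 : (1:ℝ) ≤ |s - r| + 1 := by
      have := abs_nonneg (s - r); linarith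
    have hp : |y - r| ^ (n - 1 - 1) ≤ (|s - r| + 1) ^ n :=
      (pow_le_pow_left₀ (abs_nonneg _) hy _).trans
        (pow_le_pow_right₀ hQ1 (by omega))
    have hn1 : ((n - 1 : ℕ):ℝ) ≤ (n:ℝ) := by exact_mod_cast Nat.sub_le n 1
    calc |b n * (n:ℝ) * ((n - 1 : ℕ):ℝ) * (y - r) ^ (n - 1 - 1)|
        = (n:ℝ) * ((n - 1 : ℕ):ℝ) * (|b n| * |y - r| ^ (n - 1 - 1)) := by
          rw [abs_mul, abs_mul, abs_mul, abs_pow,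
            abs_of_nonneg (Nat.cast_nonneg n : (0:ℝ) ≤ (n:ℝ)),
            abs_of_nonneg (Nat.cast_nonneg (n-1) : (0:ℝ) ≤ ((n-1:ℕ):ℝ))]
          ring
      _ ≤ (n:ℝ) * (n:ℝ) * (|b n| * (|s - r| + 1) ^ n) := by gcongr
      _ = (n:ℝ) ^ 2 * (|b n| * (|s - r| + 1) ^ n) := by ring
  have hsum2 : ∀ s : ℝ, Summable (fun n : ℕ => b n * (n:ℝ) * (s - r) ^ (n - 1)) := by
    intro s
    apply Summable.of_abs
    exact Summable.of_nonneg_of_le (fun n => abs_nonneg _)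
      (hbd2 s s (by linarith [abs_nonneg (s - r)])) (keyQ 1 s)
  have hsum3 : ∀ s : ℝ,
      Summable (fun n : ℕ => b n * (n:ℝ) * ((n - 1 : ℕ):ℝ) * (s - r) ^ (n - 1 - 1)) := by
    intro s
    apply Summable.of_abs
    exact Summable.of_nonneg_of_le (fun n => abs_nonneg _)
      (hbd3 s s (by linarith [abs_nonneg (s - r)])) (keyQ 2 s)
  -- first derivative
  have hderiv : ∀ s : ℝ, HasDerivAt (fun z => ∑' n : ℕ, b n * (z - r) ^ n)
      (∑' n : ℕ, b n * (n:ℝ) * (s - r) ^ (n - 1)) s := by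
    intro s
    have hQ0 : (0:ℝ) < |s - r| + 1 := by positivity
    apply hasDerivAt_tsum_of_isPreconnected (keyQ 1 s) Metric.isOpen_ball
      (convex_ball r (|s - r| + 1)).isPreconnected
      (g := fun n z => b n * (z - r) ^ n)
      (g' := fun n z => b n * (n:ℝ) * (z - r) ^ (n - 1))
      (y₀ := r) (y := s)
    · intro n y _
      have h : HasDerivAt (fun z => b n * (z - r) ^ n) (b n * ((n:ℝ) * (id y - r) ^ (n - 1) * 1)) y :=
        (((hasDerivAt_id y).sub_const r).pow n).const_mul (b n)
      refine h.congr_deriv ?_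
      simp only [id_eq]
      ring
    · intro n y hy
      rw [Metric.mem_ball, Real.dist_eq] at hy
      rw [Real.norm_eq_abs]
      exact hbd2 s y hy.le n
    · exact Metric.mem_ball_self hQ0
    · exact hsum1 r
    · rw [Metric.mem_ball, Real.dist_eq]
      linarith [abs_nonneg (s - r)]
  -- second derivative
  have hderiv' : ∀ s : ℝ, HasDerivAt (fun z => ∑' n : ℕ, b n * (n:ℝ) * (z - r) ^ (n - 1))
      (∑' n : ℕ, b n * (n:ℝ) * ((n - 1 : ℕ):ℝ) * (s - r) ^ (n - 1 - 1)) s := by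
    intro s
    have hQ0 : (0:ℝ) < |s - r| + 1 := by positivity
    apply hasDerivAt_tsum_of_isPreconnected (keyQ 2 s) Metric.isOpen_ball
      (convex_ball r (|s - r| + 1)).isPreconnected
      (g := fun n z => b n * (n:ℝ) * (z - r) ^ (n - 1))
      (g' := fun n z => b n * (n:ℝ) * ((n - 1 : ℕ):ℝ) * (z - r) ^ (n - 1 - 1))
      (y₀ := r) (y := s)
    · intro n y _
      have h : HasDerivAt (fun z => b n * (n:ℝ) * (z - r) ^ (n - 1))
          (b n * (n:ℝ) * (((n - 1 : ℕ):ℝ) * (id y - r) ^ (n - 1 - 1) * 1)) y :=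
        (((hasDerivAt_id y).sub_const r).pow (n - 1)).const_mul (b n * (n:ℝ))
      refine h.congr_deriv ?_
      simp only [id_eq]
      ring
    · intro n y hy
      rw [Metric.mem_ball, Real.dist_eq] at hy
      rw [Real.norm_eq_abs]
      exact hbd3 s y hy.le n
    · exact Metric.mem_ball_self hQ0
    · exact hsum2 r
    · rw [Metric.mem_ball, Real.dist_eq]
      linarith [abs_nonneg (s - r)]
  have hLfun : L = fun z => ∑' n : ℕ, b n * (z - r) ^ n := funext hL
  have hderivL : deriv L = fun s => ∑' n : ℕ, b n * (n:ℝ) * (s - r) ^ (n - 1) := by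
    funext s
    rw [hLfun]
    exact (hderiv s).deriv
  have hderiv2L : ∀ s : ℝ, deriv (deriv L) s
      = ∑' n : ℕ, b n * (n:ℝ) * ((n - 1 : ℕ):ℝ) * (s - r) ^ (n - 1 - 1) := by
    intro s
    rw [hderivL]
    exact (hderiv' s).deriv
  refine ⟨hsum0, ?_, ?_, ?_⟩
  · -- the ODE
    intro s
    rw [hderiv2L s, hL s]
    set T : ℝ := s - r with hT
    have hs : s = T + r := by rw [hT]; ring
    set G : ℕ → ℝ := fun m => if m = 0 then 0 else b (m - 1) * T ^ m with hG
    set K : ℕ → ℝ := fun n => b n * (n:ℝ) * ((n - 1 : ℕ):ℝ) * T ^ (n - 1 - 1) with hK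
    have hinj2 : Function.Injective (fun m : ℕ => m + 2) := fun a c h => by simpa using h
    have hsuppK : Function.support K ⊆ Set.range (fun m : ℕ => m + 2) := by
      intro n hn
      match n with
      | 0 => simp [hK] at hn
      | 1 => simp [hK] at hn
      | (m+2) => exact ⟨m, rfl⟩
    have e1 : ∑' m : ℕ, K (m + 2) = ∑' n : ℕ, K n := hinj2.tsum_eq hsuppK
    have eK : ∀ m : ℕ, K (m + 2) = ((m:ℝ) + 2) * ((m:ℝ) + 1) * b (m + 2) * T ^ m := by
      intro m
      simp only [hK]
      have h1 : m + 2 - 1 = m + 1 := by omega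
      have h2 : m + 2 - 1 - 1 = m := by omega
      rw [h2, h1]
      push_cast
      ring
    have hinj1 : Function.Injective Nat.succ := Nat.succ_injective
    have hsuppG : Function.support G ⊆ Set.range Nat.succ := by
      intro n hn
      match n with
      | 0 => simp [hG] at hn
      | (m+1) => exact ⟨m, rfl⟩
    have e2 : ∑' n : ℕ, G (n + 1) = ∑' m : ℕ, G m := hinj1.tsum_eq hsuppG
    have eG : ∀ n : ℕ, G (n + 1) = b n * T ^ (n + 1) := by
      intro n
      simp [hG]
    -- summabilities
    have hsumG : Summable G := by
      rw [← hinj1.summable_iff (by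
        intro x hx
        match x with
        | 0 => simp [hG]
        | (m+1) => exact absurd ⟨m, rfl⟩ hx)]
      apply Summable.congr ((hsum1 s).mul_left T)
      intro n
      show T * (b n * T ^ n) = G (n + 1)
      rw [eG n]; ring
    have hsumK : Summable K := hsum3 s
    have hsumH : Summable (fun m : ℕ => ((m:ℝ) + 2) * ((m:ℝ) + 1) * b (m + 2) * T ^ m) := by
      apply Summable.congr (hsumK.comp_injective hinj2)
      intro m
      exact eK m
    have hsumR : Summable (fun m : ℕ => r * (b m * T ^ m)) := (hsum1 s).mul_left r
    -- termwise vanishing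
    have hzero : ∀ m : ℕ,
        ((m:ℝ) + 2) * ((m:ℝ) + 1) * b (m + 2) * T ^ m + (G m + r * (b m * T ^ m)) = 0 := by
      intro m
      match m with
      | 0 => simp [hG, hb0, hb2]
      | (m+1) =>
        have hrec := hbrec (m + 1) (by omega)
        have h1 : m + 1 - 1 = m := by omega
        rw [h1] at hrec
        simp only [hG, if_neg (Nat.succ_ne_zero m), h1]
        rw [hrec]
        have hne : ((m:ℝ) + 1 + 1) * ((m:ℝ) + 1 + 2) ≠ 0 := by positivity
        push_cast
        push_cast at hne
        field_simp
        ring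
    -- assemble
    calc (∑' n : ℕ, K n) + s * ∑' n : ℕ, b n * T ^ n
        = (∑' m : ℕ, ((m:ℝ) + 2) * ((m:ℝ) + 1) * b (m + 2) * T ^ m)
            + ((∑' m : ℕ, G m) + ∑' m : ℕ, r * (b m * T ^ m)) := by
          rw [← e1, tsum_congr eK]
          congr 1
          rw [← e2, tsum_congr eG, hs]
          rw [add_mul, ← tsum_mul_left (a := T) (f := fun n => b n * T ^ n),
            ← tsum_mul_left (a := r) (f := fun n => b n * T ^ n)]
          congr 1
          exact tsum_congr fun n => by ring
      _ = ∑' m : ℕ, (((m:ℝ) + 2) * ((m:ℝ) + 1) * b (m + 2) * T ^ m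
            + (G m + r * (b m * T ^ m))) := by
          rw [Summable.tsum_add hsumH (hsumG.add hsumR), Summable.tsum_add hsumG hsumR]
      _ = ∑' _m : ℕ, (0:ℝ) := tsum_congr hzero
      _ = 0 := tsum_zero
  · -- L r = 0
    rw [hL r]
    have h : ∀ n : ℕ, b n * (r - r) ^ n = 0 := by
      intro n
      match n with
      | 0 => simp [hb0]
      | (m+1) => simp
    rw [tsum_congr h, tsum_zero]
  · -- deriv L r = 1
    rw [hderivL]
    show (∑' n : ℕ, b n * (n:ℝ) * (r - r) ^ (n - 1)) = 1
    have h' : ∀ n : ℕ, n ≠ 1 → b n * (n:ℝ) * (r - r) ^ (n - 1) = 0 := by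
      intro n hn
      match n with
      | 0 => simp
      | 1 => exact absurd rfl hn
      | (m+2) => simp
    rw [tsum_eq_single 1 h', hb1]
    norm_num
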